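/- Let k, x, d be positive integers with b ≥ x·d + (d−1), and let W be a walk that is the concatenation L₁, Q₁, L₂, Q₂, ..., Q_{b−1}, L_b of b vertex-disjoint paths L₁,...,L_b interleaved with paths Q₁,...,Q_{b−1} (a threaded linkage of size b). Then at least one of the following holds: (1) there exist d closed subwalks of W that are pairwise obtained from disjoint index intervals, each fully containing a distinct path L_i; or (2) there is a contiguous subwalk W' of W containing at least x of the paths L_i entirely and containing no closed subwalk that fully contains some L_i (i.e., the corresponding threaded linkage is untangled). -/

import Mathlib

open scoped Classical

/-- A "useful pair": a closed subwalk `[p,q]` of `W` starting at index at least `t`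
that fully contains some marked path. -/
private def UP {V : Type*} (W : List V) {b : ℕ} (s e : Fin b → ℕ) (t q : ℕ) : Prop :=
  ∃ p, t ≤ p ∧ p ≤ q ∧ q < W.length ∧ W[p]? = W[q]? ∧ ∃ i, p ≤ s i ∧ e i ≤ q

/-- Iterated greedy left endpoints. -/
private def gT (nxt : ℕ → ℕ) : ℕ → ℕ
  | 0 => 0
  | k + 1 => nxt (gT nxt k) + 1

/-- Construction of closed walks or an untangled threaded linkage.
The walk `W` contains `b` pairwise vertex-disjoint paths `L_i`, marked by the
index segments `[s i, e i]`, appearing in this order along `W` (the pieces of `W`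
between them are the threads). Then either there are `d` closed subwalks of `W`
on pairwise disjoint index intervals, each fully containing a distinct `L_i`, or
there is a contiguous subwalk of `W` containing at least `x` of the `L_i` entirely
and containing no closed subwalk fully containing some `L_i`. -/
theorem closed_walks_or_untangled {V : Type*} (A : V → V → Prop)
    (b x d : ℕ) (hb : 0 < b) (hx : 0 < x) (hd : 0 < d)
    (hbig : x * d + (d - 1) ≤ b)
    (W : List V) (hW : W.Chain' A)
    (s e : Fin b → ℕ)
    (hse : ∀ i, s i ≤ e i)
    (hlen : ∀ i, e i < W.length)
    (hord : ∀ i j : Fin b, i < j → e i < s j)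
    (hdisj : ∀ i j : Fin b, i ≠ j → ∀ p q : ℕ,
      s i ≤ p → p ≤ e i → s j ≤ q → q ≤ e j → W[p]? ≠ W[q]?) :
    (∃ p q : Fin d → ℕ,
      (∀ j, p j ≤ q j) ∧ (∀ j, q j < W.length) ∧
      (∀ j j' : Fin d, j < j' → q j < p j') ∧
      (∀ j, W[p j]? = W[q j]?) ∧
      ∃ f : Fin d → Fin b, Function.Injective f ∧
        ∀ j, p j ≤ s (f j) ∧ e (f j) ≤ q j) ∨
    (∃ p q : ℕ, p ≤ q ∧ q < W.length ∧
      x ≤ (Finset.univ.filter (fun i : Fin b => p ≤ s i ∧ e i ≤ q)).card ∧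
      ∀ p' q' : ℕ, p ≤ p' → p' < q' → q' ≤ q → W[p']? = W[q']? →
        ∀ i : Fin b, ¬ (p' ≤ s i ∧ e i ≤ q')) := by
  classical
  have hn1 : 0 < W.length := Nat.lt_of_le_of_lt (Nat.zero_le _) (hlen ⟨0, hb⟩)
  -- greedy "next right endpoint" function
  obtain ⟨nxt, hmin, hspec, hle⟩ :
      ∃ nxt : ℕ → ℕ,
        (∀ t0 q', q' < nxt t0 → ¬ UP W s e t0 q') ∧
        (∀ t0, nxt t0 < W.length → UP W s e t0 (nxt t0)) ∧
        (∀ t0, nxt t0 ≤ W.length) := by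
    refine ⟨fun t0 => if h : ∃ q', UP W s e t0 q' then Nat.find h else W.length,
      ?_, ?_, ?_⟩
    · intro t0 q' hq' hu
      have hq2 : q' < if h : ∃ q', UP W s e t0 q' then Nat.find h else W.length := hq'
      rw [dif_pos ⟨q', hu⟩] at hq2
      exact Nat.find_min ⟨q', hu⟩ hq2 hu
    · intro t0 hlt
      show UP W s e t0 (if h : ∃ q', UP W s e t0 q' then Nat.find h else W.length)
      by_cases hh : ∃ q', UP W s e t0 q'
      · rw [dif_pos hh]
        exact Nat.find_spec hh
      · have hlt2 : (if h : ∃ q', UP W s e t0 q' then Nat.find h else W.length) <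
            W.length := hlt
        rw [dif_neg hh] at hlt2; omega
    · intro t0
      show (if h : ∃ q', UP W s e t0 q' then Nat.find h else W.length) ≤ W.length
      by_cases hh : ∃ q', UP W s e t0 q'
      · rw [dif_pos hh]
        obtain ⟨p', -, -, h3, -⟩ := Nat.find_spec hh
        exact h3.le
      · rw [dif_neg hh]
  set T : ℕ → ℕ := gT nxt with hT
  have hT0 : T 0 = 0 := rfl
  have hTs : ∀ k, T (k + 1) = nxt (T k) + 1 := fun k => rfl
  by_cases hall : ∀ j, j < d → nxt (T j) < W.length
  · -- Case 1: d successful greedy steps, produce d closed walks.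
    left
    have hUf : ∀ j : Fin d, ∃ p, T j ≤ p ∧ p ≤ nxt (T j) ∧ nxt (T j) < W.length ∧
        W[p]? = W[nxt (T j)]? ∧ ∃ i, p ≤ s i ∧ e i ≤ nxt (T j) :=
      fun j => hspec _ (hall j j.2)
    choose p hp1 hp2 hp3 hp4 f hf1 hf2 using hUf
    have hstep : ∀ k, (hk : k < d) → T k < T (k + 1) := by
      intro k hk
      have h1 : T k ≤ p ⟨k, hk⟩ := hp1 ⟨k, hk⟩
      have h2 : p ⟨k, hk⟩ ≤ nxt (T k) := hp2 ⟨k, hk⟩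
      have h3 := hTs k
      omega
    have hmono : ∀ k, k ≤ d → ∀ k', k' ≤ k → T k' ≤ T k := by
      intro k
      induction k with
      | zero =>
        intro _ k' hk'
        have : k' = 0 := Nat.le_zero.mp hk'
        rw [this]
      | succ k ih =>
        intro hkd k' hk'
        rcases Nat.eq_or_lt_of_le hk' with h | h
        · rw [h]
        · exact le_trans (ih (by omega) k' (by omega)) (le_of_lt (hstep k (by omega)))
    have hord2 : ∀ j j' : Fin d, j < j' → nxt (T (j : ℕ)) < p j' := by
      intro j j' hjj'
      have h1 : nxt (T (j : ℕ)) + 1 = T ((j : ℕ) + 1) := (hTs _).symm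
      have h2 : T ((j : ℕ) + 1) ≤ T (j' : ℕ) := hmono _ j'.2.le _ (by exact hjj')
      have h3 : T (j' : ℕ) ≤ p j' := hp1 j'
      omega
    refine ⟨p, fun j => nxt (T (j : ℕ)), hp2, hp3, hord2, hp4, f, ?_, fun j => ⟨hf1 j, hf2 j⟩⟩
    intro j j' hfe
    by_contra hne
    rcases lt_trichotomy j j' with h | h | h
    · have ha := hord2 j j' h
      have hb1 : p j' ≤ s (f j') := hf1 j'
      rw [← hfe] at hb1
      have hc := hf2 j
      have hdd := hse (f j)
      omega
    · exact hne h
    · have ha := hord2 j' j h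
      have hb1 : p j ≤ s (f j) := hf1 j
      rw [hfe] at hb1
      have hc := hf2 j'
      have hdd := hse (f j')
      omega
  · -- Case 2: greedy fails before step d; build an untangled segment.
    right
    push_neg at hall
    have hex : ∃ j, j < d ∧ W.length ≤ nxt (T j) := by
      obtain ⟨j, hj1, hj2⟩ := hall
      exact ⟨j, hj1, hj2⟩
    obtain ⟨m, hmd, hQm, hQbig⟩ :
        ∃ m, m < d ∧ nxt (T m) = W.length ∧ ∀ k, m ≤ k → W.length ≤ nxt (T m) := by
      refine ⟨Nat.find hex, (Nat.find_spec hex).1,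
        le_antisymm (hle _) (Nat.find_spec hex).2, fun k _ => (Nat.find_spec hex).2⟩
    -- killed paths: those whose interval contains some greedy right endpoint
    have hK : (Finset.univ.filter
        (fun i : Fin b => ∃ k, k < m ∧ s i ≤ nxt (T k) ∧ nxt (T k) ≤ e i)).card ≤ m := by
      have := Finset.card_le_card_of_injOn
        (f := fun i : Fin b => if h : ∃ k, k < m ∧ s i ≤ nxt (T k) ∧ nxt (T k) ≤ e i
          then Nat.find h else 0)
        (s := Finset.univ.filter
          (fun i : Fin b => ∃ k, k < m ∧ s i ≤ nxt (T k) ∧ nxt (T k) ≤ e i))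
        (t := Finset.range m) ?_ ?_
      · simpa using this
      · intro i hi
        simp only [Finset.mem_coe, Finset.mem_filter, Finset.mem_univ, true_and] at hi
        show (if h : ∃ k, k < m ∧ s i ≤ nxt (T k) ∧ nxt (T k) ≤ e i
          then Nat.find h else 0) ∈ Finset.range m
        rw [dif_pos hi]
        exact Finset.mem_range.mpr (Nat.find_spec hi).1
      · intro i hi i' hi' heq
        simp only [Finset.mem_coe, Finset.mem_filter, Finset.mem_univ, true_and] at hi hi'
        have heq2 : (if h : ∃ k, k < m ∧ s i ≤ nxt (T k) ∧ nxt (T k) ≤ e i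
              then Nat.find h else 0) =
            (if h : ∃ k, k < m ∧ s i' ≤ nxt (T k) ∧ nxt (T k) ≤ e i'
              then Nat.find h else 0) := heq
        rw [dif_pos hi, dif_pos hi'] at heq2
        obtain ⟨hk1, hk2, hk3⟩ := Nat.find_spec hi
        obtain ⟨hk1', hk2', hk3'⟩ := Nat.find_spec hi'
        rw [heq2] at hk2 hk3
        by_contra hne
        rcases lt_trichotomy i i' with h | h | h
        · have := hord i i' h; omega
        · exact hne h
        · have := hord i' i h; omega
    have hcards : (Finset.univ.filter
          (fun i : Fin b => ∃ k, k < m ∧ s i ≤ nxt (T k) ∧ nxt (T k) ≤ e i)).card +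
        (Finset.univ.filter
          (fun i : Fin b => ¬ ∃ k, k < m ∧ s i ≤ nxt (T k) ∧ nxt (T k) ≤ e i)).card = b := by
      rw [Finset.card_filter_add_card_filter_not]
      simp
    have hS : x * d ≤ (Finset.univ.filter
        (fun i : Fin b => ¬ ∃ k, k < m ∧ s i ≤ nxt (T k) ∧ nxt (T k) ≤ e i)).card := by
      generalize hxd : x * d = xd at hbig ⊢
      omega
    -- survivors are covered by the m+1 segments
    have hcover : (Finset.univ.filter
        (fun i : Fin b => ¬ ∃ k, k < m ∧ s i ≤ nxt (T k) ∧ nxt (T k) ≤ e i)) ⊆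
        (Finset.range (m + 1)).biUnion
          (fun k => Finset.univ.filter
            (fun i : Fin b => T k ≤ s i ∧ e i ≤ nxt (T k) - 1)) := by
      intro i hi
      simp only [Finset.mem_filter, Finset.mem_univ, true_and] at hi
      have hex2 : ∃ k, k ≤ m ∧ e i < nxt (T k) := ⟨m, le_rfl, by rw [hQm]; exact hlen i⟩
      have hk0m : Nat.find hex2 ≤ m := (Nat.find_spec hex2).1
      have hk0e : e i < nxt (T (Nat.find hex2)) := (Nat.find_spec hex2).2
      have hTk0 : T (Nat.find hex2) ≤ s i := by
        rcases Nat.eq_zero_or_pos (Nat.find hex2) with h0 | hpos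
        · rw [h0, hT0]; exact Nat.zero_le _
        · obtain ⟨k', hk'⟩ : ∃ k', Nat.find hex2 = k' + 1 :=
            ⟨Nat.find hex2 - 1, by omega⟩
          have hmin' : ¬ (k' ≤ m ∧ e i < nxt (T k')) := Nat.find_min hex2 (by omega)
          have hk'm : k' < m := by omega
          have h1 : nxt (T k') ≤ e i := by
            by_contra hc
            exact hmin' ⟨by omega, by omega⟩
          have hs' : ¬ (s i ≤ nxt (T k') ∧ nxt (T k') ≤ e i) := fun hc => hi ⟨k', hk'm, hc⟩
          have h2 : nxt (T k') < s i := by omega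
          rw [hk', hTs k']
          omega
      simp only [Finset.mem_biUnion, Finset.mem_range, Finset.mem_filter,
        Finset.mem_univ, true_and]
      exact ⟨Nat.find hex2, by omega, hTk0, by omega⟩
    have hsum : (Finset.univ.filter
        (fun i : Fin b => ¬ ∃ k, k < m ∧ s i ≤ nxt (T k) ∧ nxt (T k) ≤ e i)).card ≤
        ∑ k ∈ Finset.range (m + 1),
          (Finset.univ.filter
            (fun i : Fin b => T k ≤ s i ∧ e i ≤ nxt (T k) - 1)).card :=
      le_trans (Finset.card_le_card hcover) Finset.card_biUnion_le
    have hgood : ∃ k, k ≤ m ∧ x ≤ (Finset.univ.filter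
        (fun i : Fin b => T k ≤ s i ∧ e i ≤ nxt (T k) - 1)).card := by
      by_contra hc
      push_neg at hc
      have hb2 : ∑ k ∈ Finset.range (m + 1),
          (Finset.univ.filter
            (fun i : Fin b => T k ≤ s i ∧ e i ≤ nxt (T k) - 1)).card ≤
          (m + 1) * (x - 1) := by
        have := Finset.sum_le_card_nsmul (Finset.range (m + 1))
          (fun k => (Finset.univ.filter
            (fun i : Fin b => T k ≤ s i ∧ e i ≤ nxt (T k) - 1)).card) (x - 1)
          (fun k hk => by
            have h := hc k (Nat.lt_succ_iff.mp (Finset.mem_range.mp hk))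
            show (Finset.univ.filter
              (fun i : Fin b => T k ≤ s i ∧ e i ≤ nxt (T k) - 1)).card ≤ x - 1
            omega)
        simpa [Finset.card_range, smul_eq_mul] using this
      have h1 : x * d ≤ (m + 1) * (x - 1) :=
        le_trans hS (le_trans hsum hb2)
      have h2 : (m + 1) * (x - 1) ≤ d * (x - 1) :=
        Nat.mul_le_mul_right _ (by omega)
      have h4 : d * (x - 1) + d = d * x := by
        have hxx : x - 1 + 1 = x := by omega
        calc d * (x - 1) + d = d * ((x - 1) + 1) := by ring
          _ = d * x := by rw [hxx]
      have h5 : d * (x - 1) < d * x :=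
        lt_of_lt_of_le (Nat.lt_add_of_pos_right hd) (le_of_eq h4)
      have h6 : d * x = x * d := Nat.mul_comm d x
      have : x * d < x * d := by
        calc x * d ≤ (m + 1) * (x - 1) := h1
          _ ≤ d * (x - 1) := h2
          _ < d * x := h5
          _ = x * d := h6
      exact absurd this (lt_irrefl _)
    obtain ⟨k, hkm, hkx⟩ := hgood
    have hseg_ne : ∃ i : Fin b, T k ≤ s i ∧ e i ≤ nxt (T k) - 1 := by
      have hpos : 0 < (Finset.univ.filter
          (fun i : Fin b => T k ≤ s i ∧ e i ≤ nxt (T k) - 1)).card :=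
        lt_of_lt_of_le hx hkx
      obtain ⟨i, hi⟩ := Finset.card_pos.mp hpos
      simp only [Finset.mem_filter, Finset.mem_univ, true_and] at hi
      exact ⟨i, hi⟩
    obtain ⟨i0, hi01, hi02⟩ := hseg_ne
    refine ⟨T k, nxt (T k) - 1, ?_, ?_, hkx, ?_⟩
    · exact le_trans hi01 (le_trans (hse i0) hi02)
    · have := hle (T k); omega
    · intro p' q' h1 h2 h3 h4 i hi5
      have hlen' := hle (T k)
      have hq'n : q' < W.length := by omega
      have hq'Q : q' < nxt (T k) := by omega
      exact hmin (T k) q' hq'Q ⟨p', h1, le_of_lt h2, hq'n, h4, i, hi5.1, hi5.2⟩
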